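/- Let r ≥ 3, k ≥ 1, and n ≥ 8 + k + (2k+12)/(r-2). Let G be the graph obtained from the Turán graph T_r(n-1) by adding one new vertex v of degree k+1. If P is a path in G of length at most k+4 that contains v but not as an end vertex, then P is contained in a Hamiltonian cycle of G. -/

import Mathlib

open SimpleGraph Finset

/-- Step lemma: choosing the next vertex preserving the invariant. -/
lemma mp_step {V : Type} [DecidableEq V] (f : V → ℕ) (S : Finset V) (a b : V)
    (ha : a ∈ S) (hb : b ∈ S) (hab : a ≠ b) (hC : 3 ≤ S.card)
    (hφ : ∀ c, 2 * (S.filter (fun u => f u = c)).card + 1 ≤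
      S.card + (if f a = c then 1 else 0) + (if f b = c then 1 else 0)) :
    ∃ a' ∈ S.erase a, a' ≠ b ∧ f a' ≠ f a ∧
      (∀ c, 2 * ((S.erase a).filter (fun u => f u = c)).card + 1 ≤
        (S.erase a).card + (if f a' = c then 1 else 0) + (if f b = c then 1 else 0)) := by
  set S' := S.erase a with hS'
  have hb' : b ∈ S' := Finset.mem_erase.2 ⟨hab.symm, hb⟩
  have hL : S.card = S'.card + 1 := by
    rw [hS', Finset.card_erase_of_mem ha]; omega
  have hL2 : 2 ≤ S'.card := by
    have : 1 < S'.card ∨ S' = {b} ∨ S' = ∅ := by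
      rcases Nat.lt_or_ge 1 S'.card with h | h
      · exact Or.inl h
      · interval_cases h' : S'.card
        · exact Or.inr (Or.inr (Finset.card_eq_zero.1 h'))
        · obtain ⟨x, hx⟩ := Finset.card_eq_one.1 h'
          have : b = x := by rw [hx] at hb'; exact Finset.mem_singleton.1 hb'
          exact Or.inr (Or.inl (this ▸ hx))
    omega
  have hcnt : ∀ c, (S.filter (fun u => f u = c)).card =
      (S'.filter (fun u => f u = c)).card + (if f a = c then 1 else 0) := by
    intro c
    rw [hS', Finset.filter_erase]
    by_cases h : f a = c
    · have hmem : a ∈ S.filter (fun u => f u = c) := Finset.mem_filter.2 ⟨ha, h⟩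
      have h1 : 1 ≤ (S.filter (fun u => f u = c)).card :=
        Finset.card_pos.2 ⟨a, hmem⟩
      rw [if_pos h, Finset.card_erase_of_mem hmem]
      omega
    · rw [if_neg h, Finset.erase_eq_of_notMem
        (by simp only [Finset.mem_filter]; exact fun hm => h hm.2 : a ∉ S.filter (fun u => f u = c))]
      omega
  have hstar : ∀ c, 2 * (S'.filter (fun u => f u = c)).card + (if f a = c then 1 else 0) ≤
      S'.card + (if f b = c then 1 else 0) := by
    intro c
    have := hφ c
    rw [hcnt c] at this
    omega
  have hsum : ∀ c1 c2, c1 ≠ c2 →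
      (S'.filter (fun u => f u = c1)).card + (S'.filter (fun u => f u = c2)).card ≤ S'.card := by
    intro c1 c2 hne
    have hdisj : Disjoint (S'.filter (fun u => f u = c1)) (S'.filter (fun u => f u = c2)) := by
      simp only [Finset.disjoint_left, Finset.mem_filter]
      rintro x ⟨-, h1⟩ ⟨-, h2⟩
      exact hne (h1.symm.trans h2)
    calc (S'.filter (fun u => f u = c1)).card + (S'.filter (fun u => f u = c2)).card
        = ((S'.filter (fun u => f u = c1)) ∪ (S'.filter (fun u => f u = c2))).card :=
          (Finset.card_union_of_disjoint hdisj).symm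
      _ ≤ S'.card := Finset.card_le_card (Finset.union_subset (Finset.filter_subset _ _)
          (Finset.filter_subset _ _))
  by_cases hA : ∃ c, c ≠ f a ∧
      2 * (S'.filter (fun u => f u = c)).card = S'.card + (if f b = c then 1 else 0)
  · obtain ⟨c₀, hc₀fa, htight⟩ := hA
    have hav : 1 + (if f b = c₀ then 1 else 0) ≤ (S'.filter (fun u => f u = c₀)).card := by
      by_cases h : f b = c₀
      · rw [if_pos h] at htight ⊢; omega
      · rw [if_neg h] at htight ⊢; omega
    obtain ⟨a', ha'S, ha'b, ha'c⟩ :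
        ∃ a', a' ∈ S'.filter (fun u => f u = c₀) ∧ a' ≠ b ∧ f a' = c₀ := by
      by_cases h : f b = c₀
      · rw [if_pos h] at hav
        obtain ⟨a', ha', hne⟩ := Finset.exists_mem_ne
          (s := S'.filter (fun u => f u = c₀)) (by omega) b
        exact ⟨a', ha', hne, (Finset.mem_filter.1 ha').2⟩
      · rw [if_neg h] at hav
        have hpos : 0 < (S'.filter (fun u => f u = c₀)).card := by omega
        obtain ⟨a', ha'⟩ := Finset.card_pos.1 hpos
        have hc := (Finset.mem_filter.1 ha').2
        exact ⟨a', ha', fun hh => h (hh ▸ hc), hc⟩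
    refine ⟨a', (Finset.mem_filter.1 ha'S).1, ha'b, by rw [ha'c]; exact hc₀fa, ?_⟩
    intro c
    rw [ha'c]
    by_cases hcc : c = c₀
    · subst hcc
      rw [if_pos rfl]
      omega
    · rw [if_neg (fun h => hcc h.symm)]
      by_cases hcfa : f a = c
      · have := hstar c
        rw [if_pos hcfa] at this
        omega
      · have hs := hstar c
        rw [if_neg hcfa] at hs
        by_contra hcon
        push_neg at hcon
        have htight2 : 2 * (S'.filter (fun u => f u = c)).card
            = S'.card + (if f b = c then 1 else 0) := by omega
        have hsum2 := hsum c₀ c (fun h => hcc h.symm)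
        have hbne1 : f b ≠ c₀ := by
          by_contra h
          rw [if_pos h] at htight
          by_cases h2 : f b = c <;> [rw [if_pos h2] at htight2; rw [if_neg h2] at htight2] <;> omega
        have hbne2 : f b ≠ c := by
          by_contra h
          rw [if_neg hbne1] at htight
          rw [if_pos h] at htight2
          omega
        rw [if_neg hbne1] at htight
        rw [if_neg hbne2] at htight2
        have hmeq : (S'.filter (fun u => f u = c₀)).card + (S'.filter (fun u => f u = c)).card
            = S'.card := by omega
        have hdisj : Disjoint (S'.filter (fun u => f u = c₀)) (S'.filter (fun u => f u = c)) := by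
          simp only [Finset.disjoint_left, Finset.mem_filter]
          rintro x ⟨-, h1⟩ ⟨-, h2⟩
          exact hcc (h1.symm.trans h2).symm
        have hUeq : (S'.filter (fun u => f u = c₀)) ∪ (S'.filter (fun u => f u = c)) = S' :=
          Finset.eq_of_subset_of_card_le (Finset.union_subset (Finset.filter_subset _ _)
            (Finset.filter_subset _ _))
            (by rw [Finset.card_union_of_disjoint hdisj]; omega)
        have hbU : b ∈ (S'.filter (fun u => f u = c₀)) ∪ (S'.filter (fun u => f u = c)) := by
          rw [hUeq]; exact hb'
        rcases Finset.mem_union.1 hbU with h | h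
        · exact hbne1 (Finset.mem_filter.1 h).2
        · exact hbne2 (Finset.mem_filter.1 h).2
  · push_neg at hA
    have hstrict : ∀ c, c ≠ f a →
        2 * (S'.filter (fun u => f u = c)).card + 1 ≤ S'.card + (if f b = c then 1 else 0) := by
      intro c hc
      have h1 := hstar c
      rw [if_neg (fun h => hc h.symm)] at h1
      have h2 := hA c hc
      omega
    obtain ⟨a', ha'S, ha'b, ha'fa⟩ : ∃ a', a' ∈ S' ∧ a' ≠ b ∧ f a' ≠ f a := by
      by_contra hcon
      push_neg at hcon
      have hsub : S'.erase b ⊆ S'.filter (fun u => f u = f a) := by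
        intro u hu
        have hu' := Finset.mem_erase.1 hu
        exact Finset.mem_filter.2 ⟨hu'.2, hcon u hu'.2 hu'.1⟩
      have hce : (S'.erase b).card = S'.card - 1 := Finset.card_erase_of_mem hb'
      have h1 : S'.card - 1 ≤ (S'.filter (fun u => f u = f a)).card :=
        hce ▸ Finset.card_le_card hsub
      have h2 := hstar (f a)
      rw [if_pos rfl] at h2
      by_cases h : f b = f a
      · have hbmem : b ∈ S'.filter (fun u => f u = f a) := Finset.mem_filter.2 ⟨hb', h⟩
        have hsub2 : S' ⊆ S'.filter (fun u => f u = f a) := by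
          intro u hu
          by_cases hub : u = b
          · exact hub ▸ hbmem
          · exact hsub (Finset.mem_erase.2 ⟨hub, hu⟩)
        have h3 : S'.card ≤ (S'.filter (fun u => f u = f a)).card := Finset.card_le_card hsub2
        rw [if_pos h] at h2
        omega
      · rw [if_neg h] at h2
        omega
    refine ⟨a', ha'S, ha'b, ha'fa, ?_⟩
    intro c
    by_cases hcfa : f a = c
    · have := hstar c
      rw [if_pos hcfa] at this
      have hfa' : f a' ≠ c := fun h => ha'fa (h.trans hcfa.symm)
      rw [if_neg hfa']
      omega
    · have := hstrict c (fun h => hcfa h.symm)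
      by_cases h' : f a' = c <;> [rw [if_pos h']; rw [if_neg h']] <;> omega

/-- Main induction: a Hamiltonian path of the complete multipartite graph induced on `S`
between prescribed ends. -/
lemma mp_ham_path {V : Type} [DecidableEq V] (G : SimpleGraph V) (f : V → ℕ) :
    ∀ (L : ℕ) (S : Finset V) (a b : V), S.card ≤ L → a ∈ S → b ∈ S → a ≠ b →
    (∀ u ∈ S, ∀ w ∈ S, f u ≠ f w → G.Adj u w) →
    (∀ c, 2 * (S.filter (fun u => f u = c)).card + 1 ≤
      S.card + (if f a = c then 1 else 0) + (if f b = c then 1 else 0)) →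
    ∃ p : G.Walk a b, p.IsPath ∧ ∀ u, u ∈ p.support ↔ u ∈ S := by
  intro L
  induction L with
  | zero => intro S a b hcard ha _ _ _ _; simp [Finset.card_eq_zero] at hcard; simp [hcard] at ha
  | succ L ih =>
    intro S a b hcard ha hb hab hadj hφ
    have h2 : 2 ≤ S.card := Finset.one_lt_card.2 ⟨a, ha, b, hb, hab⟩
    by_cases h3 : 3 ≤ S.card
    · obtain ⟨a', ha'S, ha'b, ha'fa, hφ'⟩ := mp_step f S a b ha hb hab h3 hφ
      have hbS' : b ∈ S.erase a := Finset.mem_erase.2 ⟨hab.symm, hb⟩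
      have hcard' : (S.erase a).card ≤ L := by
        rw [Finset.card_erase_of_mem ha]; omega
      have hadj' : ∀ u ∈ S.erase a, ∀ w ∈ S.erase a, f u ≠ f w → G.Adj u w :=
        fun u hu w hw => hadj u (Finset.mem_of_mem_erase hu) w (Finset.mem_of_mem_erase hw)
      obtain ⟨p', hp', hsupp'⟩ := ih (S.erase a) a' b hcard' ha'S hbS' ha'b hadj' hφ'
      have hAdj : G.Adj a a' := hadj a ha a' (Finset.mem_of_mem_erase ha'S) ha'fa.symm
      refine ⟨Walk.cons hAdj p', ?_, ?_⟩
      · rw [Walk.cons_isPath_iff]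
        exact ⟨hp', fun hmem => (Finset.mem_erase.1 ((hsupp' a).1 hmem)).1 rfl⟩
      · intro u
        rw [Walk.support_cons, List.mem_cons, hsupp' u, Finset.mem_erase]
        constructor
        · rintro (rfl | ⟨-, h⟩)
          · exact ha
          · exact h
        · intro hu
          by_cases h : u = a
          · exact Or.inl h
          · exact Or.inr ⟨h, hu⟩
    · -- S.card = 2, so S = {a, b}
      have hcard2 : S.card = 2 := by omega
      have hSab : S = {a, b} := by
        apply Finset.eq_of_subset_of_card_le
        · intro u hu
          rw [Finset.mem_insert, Finset.mem_singleton]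
          by_contra hcon
          push_neg at hcon
          have : 3 ≤ S.card := by
            have := Finset.one_lt_card.2 ⟨a, ha, b, hb, hab⟩
            have hsub : insert u {a, b} ⊆ S := by
              intro x hx
              simp only [Finset.mem_insert, Finset.mem_singleton] at hx
              rcases hx with rfl | rfl | rfl
              exacts [hu, ha, hb]
            calc 3 = (insert u ({a, b} : Finset V)).card := by
                  rw [Finset.card_insert_of_notMem (by simp [hcon.1, hcon.2]),
                    Finset.card_insert_of_notMem (by simp [hab]), Finset.card_singleton]
              _ ≤ S.card := Finset.card_le_card hsub
          omega
        · rw [hcard2]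
          exact (Finset.card_insert_le _ _).trans (by simp)
      have hfab : f a ≠ f b := by
        intro hf
        have := hφ (f a)
        rw [if_pos rfl, if_pos hf.symm] at this
        have hfil : S.filter (fun u => f u = f a) = S := by
          rw [hSab]
          apply Finset.filter_true_of_mem
          intro x hx
          simp only [Finset.mem_insert, Finset.mem_singleton] at hx
          rcases hx with rfl | rfl
          · rfl
          · exact hf.symm
        rw [hfil, hcard2] at this
        omega
      refine ⟨Walk.cons (hadj a ha b hb hfab) Walk.nil, ?_, ?_⟩
      · simp [Walk.cons_isPath_iff, hab]
      · intro u
        rw [hSab]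
        simp [or_comm]

/-- Lemma 3.2: Let `r ≥ 3`, `k ≥ 1`, `n ≥ 8 + k + (2k+12)/(r-2)`, and let `G` be the
Turán graph `T_r(n-1)` plus one new vertex `v` of degree `k+1`.  Any path of length at
most `k+4` containing `v` not as an end vertex extends to a Hamiltonian cycle of `G`. -/
theorem path_through_exceptional_vertex_in_hamiltonian_cycle
    {V : Type} [Fintype V] [DecidableEq V]
    (G : SimpleGraph V) [DecidableRel G.Adj] (n r k : ℕ)
    (hr : 3 ≤ r) (hk : 1 ≤ k)
    (hn : (n : ℝ) ≥ 8 + k + (2 * k + 12) / ((r : ℝ) - 2))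
    (hcard : Fintype.card V = n)
    (v : V) (hdeg : G.degree v = k + 1)
    (hiso : Nonempty ((G.induce ({v}ᶜ : Set V)) ≃g SimpleGraph.turanGraph (n - 1) r))
    (a b : V) (P : G.Walk a b) (hP : P.IsPath) (hlen : P.length ≤ k + 4)
    (hv : v ∈ P.support) (hva : v ≠ a) (hvb : v ≠ b) :
    ∃ (c : V) (C : G.Walk c c), C.IsHamiltonianCycle ∧ ∀ e ∈ P.edges, e ∈ C.edges := by
  classical
  obtain ⟨e⟩ := hiso
  -- the coloring
  set f : V → ℕ := fun u => if hu : u ≠ v then ((e ⟨u, hu⟩ : Fin (n-1)) : ℕ) % r else 0 with hf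
  have hfeq : ∀ u (hu : u ≠ v), f u = ((e ⟨u, hu⟩ : Fin (n-1)) : ℕ) % r := by
    intro u hu; rw [hf]; dsimp only; rw [dif_pos hu]
  have hadjf : ∀ u w, u ≠ v → w ≠ v → (G.Adj u w ↔ f u ≠ f w) := by
    intro u w hu hw
    rw [hfeq u hu, hfeq w hw]
    exact (e.map_adj_iff (v := (⟨u, hu⟩ : ({v}ᶜ : Set V))) (w := ⟨w, hw⟩)).symm
  -- numeric bounds
  have hrpos : 0 < r := by omega
  have hr2R : (0:ℝ) < (r:ℝ) - 2 := by
    have : (3:ℝ) ≤ (r:ℝ) := by exact_mod_cast hr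
    linarith
  have hkR : (1:ℝ) ≤ (k:ℝ) := by exact_mod_cast hk
  have hn9 : 9 ≤ n := by
    have hdiv : (0:ℝ) ≤ (2 * (k:ℝ) + 12) / ((r:ℝ) - 2) := by positivity
    have : (9:ℝ) ≤ (n:ℝ) := by linarith
    exact_mod_cast this
  have hkey : ((k:ℝ) * r + 8 * r) ≤ (n:ℝ) * ((r:ℝ) - 2) + 4 := by
    have h1 : (2 * (k:ℝ) + 12) / ((r:ℝ) - 2) ≤ (n:ℝ) - 8 - k := by linarith
    have h2 : (2 * (k:ℝ) + 12) ≤ ((n:ℝ) - 8 - k) * ((r:ℝ) - 2) := by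
      rw [div_le_iff₀ hr2R] at h1; linarith
    nlinarith
  have hnum : 2 * ((n-2)/r) + k + 6 ≤ n := by
    have hcast : (((n-2 : ℕ) : ℝ)) = (n:ℝ) - 2 := by
      have : (2:ℕ) ≤ n := by omega
      push_cast [Nat.cast_sub this]; ring
    have hd : (((n-2)/r : ℕ) : ℝ) ≤ ((n-2:ℕ):ℝ) / (r:ℝ) := Nat.cast_div_le
    have hrR : (0:ℝ) < (r:ℝ) := by positivity
    have hfinal : (2 * (((n-2)/r : ℕ):ℝ) + k + 6) ≤ (n:ℝ) := by
      rw [hcast] at hd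
      have hexp : ((n:ℝ) - 2) / r * r = (n:ℝ) - 2 := div_mul_cancel₀ _ (ne_of_gt hrR)
      have h3 : 2 * (((n:ℝ) - 2) / r) + k + 6 ≤ (n:ℝ) := by
        nlinarith [hexp, hkey, hrR]
      linarith
    exact_mod_cast hfinal
  -- basic path facts
  have hab : a ≠ b := by
    rintro rfl
    rw [Walk.isPath_iff_eq_nil] at hP
    subst hP
    simp only [Walk.support_nil, List.mem_singleton] at hv
    exact hva hv
  -- the vertex set for the connecting path
  set T : Finset V := P.support.toFinset with hT
  set S : Finset V := Finset.univ \ (T \ {a, b}) with hS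
  have hmemS : ∀ u, u ∈ S ↔ (u ∈ P.support → u = a ∨ u = b) := by
    intro u
    rw [hS]
    simp only [Finset.mem_sdiff, Finset.mem_univ, true_and, hT, Finset.mem_insert,
      Finset.mem_singleton, List.mem_toFinset]
    tauto
  have haS : a ∈ S := (hmemS a).2 (fun _ => Or.inl rfl)
  have hbS : b ∈ S := (hmemS b).2 (fun _ => Or.inr rfl)
  have hvS : v ∉ S := fun h => by rcases (hmemS v).1 h hv with h' | h' <;> [exact hva h'; exact hvb h']
  have hSnv : ∀ u ∈ S, u ≠ v := fun u hu he => hvS (he ▸ hu)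
  have habsub : ({a, b} : Finset V) ⊆ T := by
    intro x hx
    rw [hT, List.mem_toFinset]
    rcases Finset.mem_insert.1 hx with rfl | hx
    · exact P.start_mem_support
    · rw [Finset.mem_singleton.1 hx]; exact P.end_mem_support
  have hTcard : T.card = P.length + 1 := by
    rw [hT, List.toFinset_card_of_nodup hP.support_nodup, Walk.length_support]
  have hTn : T.card ≤ n := by rw [← hcard, ← Finset.card_univ]; exact Finset.card_le_univ T
  have h1 : (T \ {a,b}).card = T.card - 2 := by
    rw [Finset.card_sdiff_of_subset habsub, Finset.card_pair hab]
  have h2 : S.card = n - (T \ {a,b}).card := by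
    rw [hS, Finset.card_sdiff_of_subset (Finset.subset_univ _), Finset.card_univ, hcard]
  have hsdT : (T \ {a,b}).card ≤ T.card := Finset.card_le_card (Finset.sdiff_subset)
  -- class size bound
  have hcls : ∀ c, (S.filter (fun u => f u = c)).card ≤ (n-2)/r + 1 := by
    intro c
    have hb' : (S.filter (fun u => f u = c)).card ≤ (Finset.range ((n-2)/r + 1)).card := by
      apply Finset.card_le_card_of_injOn
        (fun u => if hu : u ≠ v then ((e ⟨u, hu⟩ : Fin (n-1)) : ℕ) / r else 0)
      · intro u hu
        obtain ⟨huS, huc⟩ := Finset.mem_filter.1 hu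
        have huv := hSnv u huS
        simp only [dif_pos huv, Finset.coe_range, Set.mem_Iio]
        have hlt : ((e ⟨u, huv⟩ : Fin (n-1)) : ℕ) ≤ n - 2 := by
          have := (e ⟨u, huv⟩ : Fin (n-1)).isLt
          omega
        have := Nat.div_le_div_right (c := r) hlt
        omega
      · intro u hu w hw heq
        simp only [Finset.mem_coe, Finset.mem_filter] at hu hw
        dsimp only at heq
        obtain ⟨huS, huc⟩ := hu
        obtain ⟨hwS, hwc⟩ := hw
        have huv := hSnv u huS
        have hwv := hSnv w hwS
        rw [dif_pos huv, dif_pos hwv] at heq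
        rw [hfeq u huv] at huc
        rw [hfeq w hwv] at hwc
        have hval : ((e ⟨u, huv⟩ : Fin (n-1)) : ℕ) = ((e ⟨w, hwv⟩ : Fin (n-1)) : ℕ) := by
          conv_lhs => rw [← Nat.div_add_mod ((e ⟨u, huv⟩ : Fin (n-1)) : ℕ) r]
          conv_rhs => rw [← Nat.div_add_mod ((e ⟨w, hwv⟩ : Fin (n-1)) : ℕ) r]
          rw [heq, huc, hwc]
        have : (⟨u, huv⟩ : ({v}ᶜ : Set V)) = ⟨w, hwv⟩ := e.injective (Fin.ext hval)
        exact Subtype.ext_iff.1 this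
    simpa using hb'
  -- the invariant
  have hφ : ∀ c, 2 * (S.filter (fun u => f u = c)).card + 1 ≤
      S.card + (if f a = c then 1 else 0) + (if f b = c then 1 else 0) := by
    intro c
    have hc := hcls c
    have : 2 * (S.filter (fun u => f u = c)).card + 1 ≤ S.card := by omega
    omega
  have hadjS : ∀ u ∈ S, ∀ w ∈ S, f u ≠ f w → G.Adj u w := by
    intro u hu w hw hne
    exact (hadjf u w (hSnv u hu) (hSnv w hw)).2 hne
  -- the connecting hamiltonian path on S
  obtain ⟨M, hMpath, hMsupp⟩ := mp_ham_path G f S.card S a b le_rfl haS hbS hab hadjS hφ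
  -- path surgery
  obtain ⟨y, hvy, R2, hQ2eq⟩ := Walk.exists_eq_cons_of_ne hvb (P.dropUntil v hv)
  set Q1 := P.takeUntil v hv with hQ1
  have hQ1path : Q1.IsPath := hP.takeUntil hv
  have hQ2path : (P.dropUntil v hv).IsPath := hP.dropUntil hv
  rw [hQ2eq, Walk.cons_isPath_iff] at hQ2path
  obtain ⟨hR2path, hvR2⟩ := hQ2path
  have hPsupp : P.support = Q1.support ++ R2.support := by
    conv_lhs => rw [← P.take_spec hv]
    rw [Walk.support_append, hQ2eq, Walk.support_cons, List.tail_cons]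
  have hPdisj : ∀ u ∈ Q1.support, u ∉ R2.support := by
    have := hP.support_nodup
    rw [hPsupp, List.nodup_append] at this
    exact fun u hu hu2 => this.2.2 u hu u hu2 rfl
  have hPedges : P.edges = Q1.edges ++ (s(v,y) :: R2.edges) := by
    conv_lhs => rw [← P.take_spec hv]
    rw [Walk.edges_append, hQ2eq, Walk.edges_cons]
  -- facts about M.reverse
  have hMrevsupp : M.reverse.support = b :: M.reverse.support.tail :=
    Walk.support_eq_cons M.reverse
  have hbRT : b ∉ M.reverse.support.tail := by
    have := hMpath.reverse.support_nodup
    rw [hMrevsupp, List.nodup_cons] at this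
    exact this.1
  have hRTS : ∀ u ∈ M.reverse.support.tail, u ∈ S := by
    intro u hu
    have : u ∈ M.reverse.support := List.mem_of_mem_tail hu
    rw [Walk.support_reverse, List.mem_reverse] at this
    exact (hMsupp u).1 this
  -- facts about Q1
  have hQ1supp : Q1.support = a :: Q1.support.tail := Walk.support_eq_cons Q1
  have haQ1T : a ∉ Q1.support.tail := by
    have := hQ1path.support_nodup
    rw [hQ1supp, List.nodup_cons] at this
    exact this.1
  have hSP : ∀ u ∈ S, u ∈ P.support → u = a ∨ u = b := fun u hu => (hmemS u).1 hu
  -- the long path D from y to v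
  set D : G.Walk y v := R2.append (M.reverse.append Q1) with hD
  have hDsupp : D.support = R2.support ++ (M.reverse.support.tail ++ Q1.support.tail) := by
    rw [hD, Walk.support_append, Walk.support_append]
    conv_lhs => rw [hMrevsupp]
    rw [List.cons_append, List.tail_cons]
  have hDnodup : D.support.Nodup := by
    rw [hDsupp, List.nodup_append, List.nodup_append]
    refine ⟨hR2path.support_nodup, ⟨?_, ?_, ?_⟩, ?_⟩
    · have := hMpath.reverse.support_nodup
      rw [hMrevsupp, List.nodup_cons] at this
      exact this.2
    · have := hQ1path.support_nodup
      rw [hQ1supp, List.nodup_cons] at this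
      exact this.2
    · -- disjoint RT Q1.tail
      intro u huRT w huQ1 huw; subst huw
      have huS := hRTS u huRT
      have huP : u ∈ P.support := by
        rw [hPsupp, List.mem_append]
        exact Or.inl (List.mem_of_mem_tail huQ1)
      rcases hSP u huS huP with rfl | rfl
      · exact haQ1T huQ1
      · exact hbRT huRT
    · -- disjoint R2.support (RT ++ Q1.tail)
      intro u huR2 w hu2 huw; subst huw
      rcases List.mem_append.1 hu2 with huRT | huQ1
      · have huS := hRTS u huRT
        have huP : u ∈ P.support := by
          rw [hPsupp, List.mem_append]; exact Or.inr huR2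
        rcases hSP u huS huP with rfl | rfl
        · exact hPdisj _ Q1.start_mem_support huR2
        · exact hbRT huRT
      · exact hPdisj u (List.mem_of_mem_tail huQ1) huR2
  have hDpath : D.IsPath := by rw [Walk.isPath_def]; exact hDnodup
  have hyR2 : y ∈ R2.support := R2.start_mem_support
  have hEdge : s(v, y) ∉ D.edges := by
    intro hmem
    rw [hD, Walk.edges_append, Walk.edges_append, List.mem_append, List.mem_append] at hmem
    rcases hmem with h | h | h
    · exact hvR2 (Walk.fst_mem_support_of_mem_edges R2 h)
    · have : v ∈ M.reverse.support := Walk.fst_mem_support_of_mem_edges _ h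
      rw [Walk.support_reverse, List.mem_reverse] at this
      exact hvS ((hMsupp v).1 this)
    · have : y ∈ Q1.support := Walk.snd_mem_support_of_mem_edges _ h
      exact hPdisj y this hyR2
  -- the hamiltonian cycle
  refine ⟨v, Walk.cons hvy D, ?_, ?_⟩
  · rw [Walk.isHamiltonianCycle_iff_isCycle_and_support_count_tail_eq_one]
    constructor
    · exact (Walk.cons_isCycle_iff D hvy).2 ⟨hDpath, hEdge⟩
    · intro x
      rw [Walk.support_cons, List.tail_cons]
      apply List.count_eq_one_of_mem hDnodup
      rw [hDsupp, List.mem_append, List.mem_append]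
      by_cases hxS : x ∈ S
      · by_cases hxb : x = b
        · exact Or.inl (hxb ▸ R2.end_mem_support)
        · have : x ∈ M.reverse.support := by
            rw [Walk.support_reverse, List.mem_reverse]
            exact (hMsupp x).2 hxS
          rw [hMrevsupp] at this
          rcases List.mem_cons.1 this with h | h
          · exact absurd h hxb
          · exact Or.inr (Or.inl h)
      · have hxP : x ∈ P.support := by
          by_contra hxP
          exact hxS ((hmemS x).2 (fun h => absurd h hxP))
        have hxa : x ≠ a := fun h => hxS (h ▸ haS)
        have hxb : x ≠ b := fun h => hxS (h ▸ hbS)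
        rw [hPsupp, List.mem_append] at hxP
        rcases hxP with h | h
        · rw [hQ1supp] at h
          rcases List.mem_cons.1 h with h' | h'
          · exact absurd h' hxa
          · exact Or.inr (Or.inr h')
        · exact Or.inl h
  · intro ed hed
    rw [hPedges, List.mem_append, List.mem_cons] at hed
    rw [Walk.edges_cons, hD, Walk.edges_append, Walk.edges_append]
    simp only [List.mem_cons, List.mem_append]
    tauto
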